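/- Let (e_n)_{n≥1} be an orthonormal basis of H, x_n = Σ_{k=1}^n (−1)^{n+k} e_k, y_n = e_n + e_{n+1}, and G = span{e_n}. Then for all f, g ∈ G, ⟨f, g⟩ = Σ_{n=1}^∞ ⟨f, y_n⟩⟨x_n, g⟩ = Σ_{n=1}^∞ ⟨f, x_n⟩⟨y_n, g⟩; i.e., (x_n) and (y_n) are G-quasi bases. -/

import Mathlib

open scoped InnerProductSpace
open Filter Topology

theorem stmt10 {H : Type*} [NormedAddCommGroup H] [InnerProductSpace ℂ H] [CompleteSpace H]
    (b : HilbertBasis ℕ ℂ H) (x y : ℕ → H)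
    (hx : ∀ n, x n = ∑ k ∈ Finset.range (n + 1), ((-1 : ℂ)) ^ (n + k) • b k)
    (hy : ∀ n, y n = b n + b (n + 1)) :
    ∀ f ∈ Submodule.span ℂ (Set.range fun n => b n),
      ∀ g ∈ Submodule.span ℂ (Set.range fun n => b n),
        HasSum (fun n => ⟪f, y n⟫_ℂ * ⟪x n, g⟫_ℂ) ⟪f, g⟫_ℂ ∧
        HasSum (fun n => ⟪f, x n⟫_ℂ * ⟪y n, g⟫_ℂ) ⟪f, g⟫_ℂ := by
  classical
  have horth : ∀ i j, ⟪(b i : H), b j⟫_ℂ = if i = j then 1 else 0 :=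
    orthonormal_iff_ite.mp b.orthonormal
  have hx0 : x 0 = b 0 := by simp [hx 0]
  have hxs : ∀ m, x m + x (m + 1) = b (m + 1) := by
    intro m
    rw [hx (m + 1), Finset.sum_range_succ, hx m]
    have h1 : ((-1 : ℂ)) ^ (m + 1 + (m + 1)) = 1 := by
      rw [show m + 1 + (m + 1) = 2 * (m + 1) by ring, pow_mul]; norm_num
    rw [h1, one_smul]
    have h2 : ∑ k ∈ Finset.range (m + 1), ((-1 : ℂ)) ^ (m + 1 + k) • b k
        = -∑ k ∈ Finset.range (m + 1), ((-1 : ℂ)) ^ (m + k) • b k := by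
      rw [← Finset.sum_neg_distrib]
      refine Finset.sum_congr rfl fun k _ => ?_
      rw [← neg_smul]
      congr 1
      rw [show m + 1 + k = (m + k) + 1 by ring, pow_succ]
      ring
    rw [h2]; abel
  -- base cases
  have key1 : ∀ i j, HasSum (fun n => ⟪(b i : H), y n⟫_ℂ * ⟪x n, b j⟫_ℂ) ⟪(b i : H), b j⟫_ℂ := by
    intro i j
    match i with
    | 0 =>
      have hv : ∀ n ∉ ({0} : Finset ℕ), ⟪(b 0 : H), y n⟫_ℂ * ⟪x n, b j⟫_ℂ = 0 := by
        intro n hn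
        simp only [Finset.mem_singleton] at hn
        have h1 : 0 ≠ n := fun h => hn h.symm
        have h2 : (0 : ℕ) ≠ n + 1 := by omega
        simp [hy n, inner_add_right, horth, h1, h2]
      have := (hasSum_sum_of_ne_finset_zero hv : HasSum _ _)
      simpa [hy 0, inner_add_right, horth, hx0, b.orthonormal.1 0] using this
    | m + 1 =>
      have hv : ∀ n ∉ ({m, m + 1} : Finset ℕ),
          ⟪(b (m + 1) : H), y n⟫_ℂ * ⟪x n, b j⟫_ℂ = 0 := by
        intro n hn
        simp only [Finset.mem_insert, Finset.mem_singleton] at hn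
        have h1 : m + 1 ≠ n := by omega
        have h2 : m + 1 ≠ n + 1 := by omega
        simp [hy n, inner_add_right, horth, h1, h2]; intro h; exact absurd h (by omega)
      have := (hasSum_sum_of_ne_finset_zero hv : HasSum _ _)
      have hsum : ∑ n ∈ ({m, m + 1} : Finset ℕ), ⟪(b (m + 1) : H), y n⟫_ℂ * ⟪x n, b j⟫_ℂ
          = ⟪(b (m + 1) : H), b j⟫_ℂ := by
        rw [Finset.sum_pair (by omega : m ≠ m + 1)]
        have e1 : ⟪(b (m + 1) : H), y m⟫_ℂ = 1 := by
          simp [hy m, inner_add_right, horth, (by omega : m + 1 ≠ m), b.orthonormal.1 (m + 1)]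
        have e2 : ⟪(b (m + 1) : H), y (m + 1)⟫_ℂ = 1 := by
          simp [hy (m + 1), inner_add_right, horth, (by omega : m + 1 ≠ m + 2), b.orthonormal.1 (m + 1)]
        rw [e1, e2, one_mul, one_mul, ← inner_add_left, hxs m]
      rwa [hsum] at this
  have key2 : ∀ i j, HasSum (fun n => ⟪(b i : H), x n⟫_ℂ * ⟪y n, b j⟫_ℂ) ⟪(b i : H), b j⟫_ℂ := by
    intro i j
    match j with
    | 0 =>
      have hv : ∀ n ∉ ({0} : Finset ℕ), ⟪(b i : H), x n⟫_ℂ * ⟪y n, b 0⟫_ℂ = 0 := by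
        intro n hn
        simp only [Finset.mem_singleton] at hn
        have h1 : n ≠ 0 := hn
        have h2 : n + 1 ≠ 0 := by omega
        simp [hy n, inner_add_left, horth, h1, h2]
      have := (hasSum_sum_of_ne_finset_zero hv : HasSum _ _)
      simpa [hy 0, inner_add_left, horth, hx0, b.orthonormal.1 0] using this
    | m + 1 =>
      have hv : ∀ n ∉ ({m, m + 1} : Finset ℕ),
          ⟪(b i : H), x n⟫_ℂ * ⟪y n, b (m + 1)⟫_ℂ = 0 := by
        intro n hn
        simp only [Finset.mem_insert, Finset.mem_singleton] at hn
        have h1 : n ≠ m + 1 := by omega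
        have h2 : n + 1 ≠ m + 1 := by omega
        simp [hy n, inner_add_left, horth, h1, h2]; intro h; exact absurd h (by omega)
      have := (hasSum_sum_of_ne_finset_zero hv : HasSum _ _)
      have hsum : ∑ n ∈ ({m, m + 1} : Finset ℕ), ⟪(b i : H), x n⟫_ℂ * ⟪y n, b (m + 1)⟫_ℂ
          = ⟪(b i : H), b (m + 1)⟫_ℂ := by
        rw [Finset.sum_pair (by omega : m ≠ m + 1)]
        have e1 : ⟪y m, (b (m + 1) : H)⟫_ℂ = 1 := by
          simp [hy m, inner_add_left, horth, (by omega : m ≠ m + 1), b.orthonormal.1 (m + 1)]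
        have e2 : ⟪y (m + 1), (b (m + 1) : H)⟫_ℂ = 1 := by
          simp [hy (m + 1), inner_add_left, horth, (by omega : m + 2 ≠ m + 1), b.orthonormal.1 (m + 1)]
        rw [e1, e2, mul_one, mul_one, ← inner_add_right, hxs m]
      rwa [hsum] at this
  -- generalize over g for fixed basis vector f
  have step1 : ∀ i, ∀ g ∈ Submodule.span ℂ (Set.range fun n => b n),
      HasSum (fun n => ⟪(b i : H), y n⟫_ℂ * ⟪x n, g⟫_ℂ) ⟪(b i : H), g⟫_ℂ := by
    intro i g hg
    induction hg using Submodule.span_induction with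
    | mem g hgmem =>
      obtain ⟨j, rfl⟩ := hgmem
      exact key1 i j
    | zero => simpa using hasSum_zero
    | add g₁ g₂ _ _ h1 h2 =>
      simpa [inner_add_right, mul_add] using h1.add h2
    | smul c g _ h =>
      simpa [inner_smul_right, mul_left_comm] using h.mul_left c
  have step2 : ∀ i, ∀ g ∈ Submodule.span ℂ (Set.range fun n => b n),
      HasSum (fun n => ⟪(b i : H), x n⟫_ℂ * ⟪y n, g⟫_ℂ) ⟪(b i : H), g⟫_ℂ := by
    intro i g hg
    induction hg using Submodule.span_induction with
    | mem g hgmem =>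
      obtain ⟨j, rfl⟩ := hgmem
      exact key2 i j
    | zero => simpa using hasSum_zero
    | add g₁ g₂ _ _ h1 h2 =>
      simpa [inner_add_right, mul_add] using h1.add h2
    | smul c g _ h =>
      simpa [inner_smul_right, mul_left_comm] using h.mul_left c
  intro f hf
  induction hf using Submodule.span_induction with
  | mem f hfmem =>
    obtain ⟨i, rfl⟩ := hfmem
    intro g hg
    exact ⟨step1 i g hg, step2 i g hg⟩
  | zero =>
    intro g hg
    constructor <;> simpa using hasSum_zero
  | add f₁ f₂ _ _ h1 h2 =>
    intro g hg
    obtain ⟨h1a, h1b⟩ := h1 g hg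
    obtain ⟨h2a, h2b⟩ := h2 g hg
    constructor
    · simpa [inner_add_left, add_mul] using h1a.add h2a
    · simpa [inner_add_left, add_mul] using h1b.add h2b
  | smul c f _ h =>
    intro g hg
    obtain ⟨ha, hb⟩ := h g hg
    constructor
    · simpa [inner_smul_left, mul_assoc, mul_comm, mul_left_comm] using ha.mul_left ((starRingEnd ℂ) c)
    · simpa [inner_smul_left, mul_assoc, mul_comm, mul_left_comm] using hb.mul_left ((starRingEnd ℂ) c)
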